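/- Let f, g ∈ G satisfy: a < f a and a < g a for every a ∈ ℚ; for all a, b ∈ ℚ there exist m, n ∈ ℕ with b ≤ f^m a and b ≤ g^n a; f ∘ g = g ∘ f; and the joint centralizer C = {h ∈ G : h∘f = f∘h and h∘g = g∘h} is commutative. Then C is countable. -/

import Mathlib

open FirstOrder

/-- `G` is the group of all order-automorphisms of `(ℚ, <)` under composition. -/
abbrev G : Type := ℚ ≃o ℚ

/-- The support of `f ∈ G`: the set of points moved by `f`. -/
def support (f : G) : Set ℚ := {a : ℚ | f a ≠ a}

/-- The orbital relation of `f`: `a ~_f b` iff `f^m a ≤ b ≤ f^n a` for some integers `m, n`. -/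
def orbRel (f : G) (a b : ℚ) : Prop := ∃ m n : ℤ, (f ^ m) a ≤ b ∧ b ≤ (f ^ n) a

/-- An orbital of `f` is an equivalence class of the orbital relation of `f`. -/
def IsOrbital (f : G) (X : Set ℚ) : Prop := ∃ a : ℚ, X = {b : ℚ | orbRel f a b}

/-- An orbital is nontrivial if it contains a point moved by `f`. -/
def IsNontrivialOrbital (f : G) (X : Set ℚ) : Prop :=
  IsOrbital f X ∧ ∃ a ∈ X, f a ≠ a

/-- A bump is a non-identity element of `G` with exactly one nontrivial orbital. -/
def IsBump (f : G) : Prop := f ≠ 1 ∧ ∃! X : Set ℚ, IsNontrivialOrbital f X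

/-- `g` is a restriction of `f`: the support of `g` is contained in that of `f`, and
`g` agrees with `f` on the support of `g`. -/
def IsRestriction (g f : G) : Prop :=
  support g ⊆ support f ∧ ∀ a ∈ support g, g a = f a

/-- The joint centralizer in `G` of a pair `f, g`. -/
def jointCentralizer (f g : G) : Set G :=
  {h : G | (∀ a : ℚ, h (f a) = f (h a)) ∧ (∀ a : ℚ, h (g a) = g (h a))}


set_option linter.unusedSectionVars false
set_option maxHeartbeats 1000000

namespace Gauge

lemma Gmul_apply (σ τ : G) (x : ℚ) : (σ * τ) x = σ (τ x) := rfl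
lemma Gone_apply (x : ℚ) : (1 : G) x = x := rfl
lemma Ginv_apply_apply (σ : G) (x : ℚ) : σ⁻¹ (σ x) = x := σ.symm_apply_apply x
lemma Gapply_inv_apply (σ : G) (x : ℚ) : σ (σ⁻¹ x) = x := σ.apply_symm_apply x

section Spread

variable (f g : G)

/-- translation by exponents -/
def W (m n : ℤ) : G := f ^ m * g ^ n

variable {f g} (hfg : Commute f g)
include hfg

lemma W_mul (m n m' n' : ℤ) : W f g m n * W f g m' n' = W f g (m + m') (n + n') := by
  have h1 : Commute (g ^ n) (f ^ m') := (hfg.symm.zpow_zpow n m')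
  unfold W
  rw [mul_assoc, ← mul_assoc (g^n), h1.eq, mul_assoc, ← zpow_add, ← mul_assoc, ← zpow_add]

lemma W_inv (m n : ℤ) : (W f g m n)⁻¹ = W f g (-m) (-n) := by
  have h := W_mul hfg m n (-m) (-n)
  simp only [add_neg_cancel] at h
  have h0 : W f g 0 0 = 1 := by unfold W; simp
  rw [h0] at h
  exact inv_eq_of_mul_eq_one_right h

omit hfg in
lemma W_zero : W f g 0 0 = (1 : G) := by unfold W; simp

lemma f_mul_W (m n : ℤ) : f * W f g m n = W f g (m+1) n := by
  unfold W
  rw [← mul_assoc, ← zpow_one_add, add_comm]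

lemma g_mul_W (m n : ℤ) : g * W f g m n = W f g m (n+1) := by
  have h1 : Commute g (f ^ m) := (hfg.symm.zpow_right m)
  unfold W
  rw [← mul_assoc, h1.eq, mul_assoc, ← zpow_one_add, add_comm]

end Spread

section Spread2

variable {f g : G} {p q : ℚ}

/-- the piece membership predicate -/
def Pc (f g : G) (p q : ℚ) (y : ℚ) : Prop :=
  ∃ mn : ℤ × ℤ, (W f g mn.1 mn.2)⁻¹ y ∈ Set.Ioo p q

open Classical in
/-- the spread of `θ` over all pieces -/
noncomputable def sprF (f g : G) (p q : ℚ) (θ : G) : ℚ → ℚ := fun y =>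
  if h : Pc f g p q y then
    (W f g h.choose.1 h.choose.2) (θ ((W f g h.choose.1 h.choose.2)⁻¹ y)) else y

variable (hfg : Commute f g) (hpq : p < q)
variable (hstar : ∀ m n : ℤ, (∃ x ∈ Set.Ioo p q, (W f g m n) x ∈ Set.Ioo p q) →
    ∀ x ∈ Set.Ioo p q, (W f g m n) x = x)
variable {θ : G} (hsupp : ∀ x, x ∉ Set.Ioo p q → θ x = x)
  (hmaps : ∀ x, x ∈ Set.Ioo p q → θ x ∈ Set.Ioo p q)

lemma sprF_not {y : ℚ} (h : ¬ Pc f g p q y) : sprF f g p q θ y = y := dif_neg h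

omit hfg hpq hstar hsupp hmaps in
lemma mem_piece_iff (m n : ℤ) (y : ℚ) :
    (W f g m n)⁻¹ y ∈ Set.Ioo p q ↔ (W f g m n) p < y ∧ y < (W f g m n) q := by
  constructor
  · rintro ⟨h1, h2⟩
    refine ⟨?_, ?_⟩
    · have := (W f g m n).strictMono h1
      rwa [Gapply_inv_apply] at this
    · have := (W f g m n).strictMono h2
      rwa [Gapply_inv_apply] at this
  · rintro ⟨h1, h2⟩
    refine ⟨?_, ?_⟩
    · have := ((W f g m n)⁻¹ : G).strictMono h1
      rwa [Ginv_apply_apply] at this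
    · have := ((W f g m n)⁻¹ : G).strictMono h2
      rwa [Ginv_apply_apply] at this

include hfg hpq hstar hsupp hmaps

/-- well-definedness: value can be computed from any witness. -/
lemma sprF_eval {y : ℚ} {m n : ℤ} (hw : (W f g m n)⁻¹ y ∈ Set.Ioo p q) :
    sprF f g p q θ y = (W f g m n) (θ ((W f g m n)⁻¹ y)) := by
  have hPc : Pc f g p q y := ⟨(m, n), hw⟩
  rw [sprF, dif_pos hPc]
  set m' := hPc.choose.1
  set n' := hPc.choose.2
  have hw' : (W f g m' n')⁻¹ y ∈ Set.Ioo p q := hPc.choose_spec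
  set v : G := W f g (m - m') (n - n') with hv
  have hvW : W f g m' n' * v = W f g m n := by
    rw [hv, W_mul hfg]; congr 1 <;> ring
  have hvx : v ((W f g m n)⁻¹ y) = (W f g m' n')⁻¹ y := by
    have h2 : (W f g m' n') (v ((W f g m n)⁻¹ y)) = y := by
      rw [← Gmul_apply, hvW, Gapply_inv_apply]
    calc v ((W f g m n)⁻¹ y)
        = (W f g m' n')⁻¹ ((W f g m' n') (v ((W f g m n)⁻¹ y))) := by rw [Ginv_apply_apply]
      _ = (W f g m' n')⁻¹ y := by rw [h2]
  have hid : ∀ x ∈ Set.Ioo p q, v x = x := by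
    apply hstar
    exact ⟨(W f g m n)⁻¹ y, hw, by rw [hvx]; exact hw'⟩
  have hxx : (W f g m' n')⁻¹ y = (W f g m n)⁻¹ y := by
    rw [← hvx, hid _ hw]
  rw [hxx]
  have hθ : θ ((W f g m n)⁻¹ y) ∈ Set.Ioo p q := hmaps _ hw
  calc (W f g m' n') (θ ((W f g m n)⁻¹ y))
      = (W f g m' n') (v (θ ((W f g m n)⁻¹ y))) := by rw [hid _ hθ]
    _ = (W f g m n) (θ ((W f g m n)⁻¹ y)) := by rw [← Gmul_apply, hvW]

lemma sprF_mem_piece {y : ℚ} {m n : ℤ} (hw : (W f g m n)⁻¹ y ∈ Set.Ioo p q) :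
    (W f g m n)⁻¹ (sprF f g p q θ y) ∈ Set.Ioo p q := by
  rw [sprF_eval hfg hpq hstar hsupp hmaps hw, Ginv_apply_apply]
  exact hmaps _ hw

/-- pieces that overlap coincide (as membership predicates) -/
lemma piece_eq {m n m' n' : ℤ} {z : ℚ} (hz : (W f g m n)⁻¹ z ∈ Set.Ioo p q)
    (hz' : (W f g m' n')⁻¹ z ∈ Set.Ioo p q) {y : ℚ} (hy : (W f g m n)⁻¹ y ∈ Set.Ioo p q) :
    (W f g m' n')⁻¹ y ∈ Set.Ioo p q := by
  set v : G := W f g (m - m') (n - n') with hv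
  have hvW : W f g m' n' * v = W f g m n := by
    rw [hv, W_mul hfg]; congr 1 <;> ring
  have hvx : ∀ t : ℚ, v ((W f g m n)⁻¹ t) = (W f g m' n')⁻¹ t := by
    intro t
    have h2 : (W f g m' n') (v ((W f g m n)⁻¹ t)) = t := by
      rw [← Gmul_apply, hvW, Gapply_inv_apply]
    calc v ((W f g m n)⁻¹ t)
        = (W f g m' n')⁻¹ ((W f g m' n') (v ((W f g m n)⁻¹ t))) := by rw [Ginv_apply_apply]
      _ = (W f g m' n')⁻¹ t := by rw [h2]
  have hid : ∀ x ∈ Set.Ioo p q, v x = x := by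
    apply hstar
    exact ⟨(W f g m n)⁻¹ z, hz, by rw [hvx]; exact hz'⟩
  rw [← hvx y, hid _ hy]
  exact hy

lemma sprF_strictMono : StrictMono (sprF f g p q θ) := by
  intro y y' hyy
  by_cases hy : Pc f g p q y
  · obtain ⟨⟨m, n⟩, hw⟩ := hy
    have hsy := sprF_mem_piece hfg hpq hstar hsupp hmaps hw
    rw [mem_piece_iff] at hsy
    by_cases hy' : (W f g m n)⁻¹ y' ∈ Set.Ioo p q
    · rw [sprF_eval hfg hpq hstar hsupp hmaps hw, sprF_eval hfg hpq hstar hsupp hmaps hy']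
      exact (W f g m n).strictMono (θ.strictMono (((W f g m n)⁻¹ : G).strictMono hyy))
    · have hwP := (mem_piece_iff m n y).mp hw
      by_cases hPy' : Pc f g p q y'
      · obtain ⟨⟨m', n'⟩, hw'⟩ := hPy'
        have hsy' := sprF_mem_piece hfg hpq hstar hsupp hmaps hw'
        rw [mem_piece_iff] at hsy'
        have hw'P := (mem_piece_iff m' n' y').mp hw'
        -- the pieces are disjoint, and piece (m,n) is below piece (m',n')
        have hdisj : (W f g m n) q ≤ (W f g m' n') p := by
          by_contra hcon
          push_neg at hcon
          -- then the open intervals overlap, take a common point z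
          have hlt1 : (W f g m n) p < (W f g m n) q := (W f g m n).strictMono hpq
          have hlt2 : (W f g m' n') p < (W f g m' n') q := (W f g m' n').strictMono hpq
          have hmax : max ((W f g m n) p) ((W f g m' n') p)
              < min ((W f g m n) q) ((W f g m' n') q) := by
            simp only [max_lt_iff, lt_min_iff]
            refine ⟨⟨?_, ?_⟩, ⟨?_, ?_⟩⟩ <;>
              first
                | exact hlt1
                | exact hlt2
                | exact hcon
                | exact lt_trans hwP.1 (lt_trans hyy hw'P.2)
          obtain ⟨z, hz1, hz2⟩ := exists_between hmax
          have hzmn : (W f g m n)⁻¹ z ∈ Set.Ioo p q := by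
            rw [mem_piece_iff]
            exact ⟨lt_of_le_of_lt (le_max_left _ _) hz1, lt_of_lt_of_le hz2 (min_le_left _ _)⟩
          have hzm'n' : (W f g m' n')⁻¹ z ∈ Set.Ioo p q := by
            rw [mem_piece_iff]
            exact ⟨lt_of_le_of_lt (le_max_right _ _) hz1, lt_of_lt_of_le hz2 (min_le_right _ _)⟩
          exact hy' (piece_eq hfg hpq hstar hsupp hmaps hzm'n' hzmn hw')
        calc sprF f g p q θ y < (W f g m n) q := hsy.2
          _ ≤ (W f g m' n') p := hdisj
          _ < sprF f g p q θ y' := hsy'.1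
      · rw [sprF_not hPy']
        -- y' is above the piece of y
        have : ¬ (W f g m n)⁻¹ y' ∈ Set.Ioo p q := hy'
        rw [mem_piece_iff] at this
        push_neg at this
        have h2 : (W f g m n) q ≤ y' := this (lt_trans hwP.1 hyy)
        exact lt_of_lt_of_le hsy.2 h2
  · rw [sprF_not hy]
    by_cases hPy' : Pc f g p q y'
    · obtain ⟨⟨m', n'⟩, hw'⟩ := hPy'
      have hsy' := sprF_mem_piece hfg hpq hstar hsupp hmaps hw'
      rw [mem_piece_iff] at hsy'
      have hw'P := (mem_piece_iff m' n' y').mp hw'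
      have hyout : ¬ (W f g m' n')⁻¹ y ∈ Set.Ioo p q := fun hc => hy ⟨(m', n'), hc⟩
      rw [mem_piece_iff] at hyout
      push_neg at hyout
      rcases lt_or_ge ((W f g m' n') p) y with hcase | hcase
      · exact absurd (hyout hcase) (not_le.mpr (lt_trans hyy hw'P.2))
      · exact lt_of_le_of_lt hcase hsy'.1
    · rw [sprF_not hPy']; exact hyy

lemma sprF_surjective : Function.Surjective (sprF f g p q θ) := by
  intro z
  by_cases hz : Pc f g p q z
  · obtain ⟨⟨m, n⟩, hw⟩ := hz
    refine ⟨(W f g m n) (θ⁻¹ ((W f g m n)⁻¹ z)), ?_⟩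
    have hθinv : θ⁻¹ ((W f g m n)⁻¹ z) ∈ Set.Ioo p q := by
      by_contra hc
      have := hsupp _ hc
      have h2 : (W f g m n)⁻¹ z = θ⁻¹ ((W f g m n)⁻¹ z) := by
        conv_lhs => rw [← Gapply_inv_apply θ ((W f g m n)⁻¹ z)]
        rw [this]
      rw [← h2] at hc
      exact hc hw
    have hwit : (W f g m n)⁻¹ ((W f g m n) (θ⁻¹ ((W f g m n)⁻¹ z))) ∈ Set.Ioo p q := by
      rw [Ginv_apply_apply]; exact hθinv
    rw [sprF_eval hfg hpq hstar hsupp hmaps hwit, Ginv_apply_apply, Gapply_inv_apply,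
      Gapply_inv_apply]
  · exact ⟨z, sprF_not hz⟩

/-- the spread as an element of G -/
noncomputable def spread : G :=
  StrictMono.orderIsoOfSurjective _ (sprF_strictMono hfg hpq hstar hsupp hmaps)
    (sprF_surjective hfg hpq hstar hsupp hmaps)

lemma spread_apply (y : ℚ) : spread hfg hpq hstar hsupp hmaps y = sprF f g p q θ y :=
  congrFun (StrictMono.coe_orderIsoOfSurjective _ _ _) y

lemma spread_eval_base {y : ℚ} (hy : y ∈ Set.Ioo p q) :
    spread hfg hpq hstar hsupp hmaps y = θ y := by
  have hw : (W f g 0 0)⁻¹ y ∈ Set.Ioo p q := by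
    rw [W_zero]; simpa using hy
  rw [spread_apply, sprF_eval hfg hpq hstar hsupp hmaps hw, W_zero]
  simp [Gone_apply]

lemma spread_comm_f (y : ℚ) :
    spread hfg hpq hstar hsupp hmaps (f y) = f (spread hfg hpq hstar hsupp hmaps y) := by
  rw [spread_apply, spread_apply]
  by_cases hy : Pc f g p q y
  · obtain ⟨⟨m, n⟩, hw⟩ := hy
    have hwf : (W f g (m+1) n)⁻¹ (f y) ∈ Set.Ioo p q := by
      have h1 : (W f g (m+1) n)⁻¹ (f y) = (W f g m n)⁻¹ y := by
        rw [← f_mul_W hfg m n, mul_inv_rev, Gmul_apply, Ginv_apply_apply]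
      rw [h1]; exact hw
    rw [sprF_eval hfg hpq hstar hsupp hmaps hwf, sprF_eval hfg hpq hstar hsupp hmaps hw]
    have h1 : (W f g (m+1) n)⁻¹ (f y) = (W f g m n)⁻¹ y := by
      rw [← f_mul_W hfg m n, mul_inv_rev, Gmul_apply, Ginv_apply_apply]
    rw [h1, ← f_mul_W hfg m n, Gmul_apply]
  · have hfy : ¬ Pc f g p q (f y) := by
      rintro ⟨⟨m, n⟩, hw⟩
      apply hy
      refine ⟨(m - 1, n), ?_⟩
      have h1 : (W f g (m-1) n)⁻¹ y = (W f g m n)⁻¹ (f y) := by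
        have h2 : f * W f g (m-1) n = W f g m n := by
          rw [f_mul_W hfg]; congr 1; ring
        rw [← h2, mul_inv_rev, Gmul_apply]
        congr 1
        rw [Ginv_apply_apply]
      rw [h1]; exact hw
    rw [sprF_not hy, sprF_not hfy]

lemma spread_comm_g (y : ℚ) :
    spread hfg hpq hstar hsupp hmaps (g y) = g (spread hfg hpq hstar hsupp hmaps y) := by
  rw [spread_apply, spread_apply]
  by_cases hy : Pc f g p q y
  · obtain ⟨⟨m, n⟩, hw⟩ := hy
    have hwf : (W f g m (n+1))⁻¹ (g y) ∈ Set.Ioo p q := by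
      have h1 : (W f g m (n+1))⁻¹ (g y) = (W f g m n)⁻¹ y := by
        rw [← g_mul_W hfg m n, mul_inv_rev, Gmul_apply, Ginv_apply_apply]
      rw [h1]; exact hw
    rw [sprF_eval hfg hpq hstar hsupp hmaps hwf, sprF_eval hfg hpq hstar hsupp hmaps hw]
    have h1 : (W f g m (n+1))⁻¹ (g y) = (W f g m n)⁻¹ y := by
      rw [← g_mul_W hfg m n, mul_inv_rev, Gmul_apply, Ginv_apply_apply]
    rw [h1, ← g_mul_W hfg m n, Gmul_apply]
  · have hfy : ¬ Pc f g p q (g y) := by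
      rintro ⟨⟨m, n⟩, hw⟩
      apply hy
      refine ⟨(m, n - 1), ?_⟩
      have h1 : (W f g m (n-1))⁻¹ y = (W f g m n)⁻¹ (g y) := by
        have h2 : g * W f g m (n-1) = W f g m n := by
          rw [g_mul_W hfg]; congr 1; ring
        rw [← h2, mul_inv_rev, Gmul_apply]
        congr 1
        rw [Ginv_apply_apply]
      rw [h1]; exact hw
    rw [sprF_not hy, sprF_not hfy]

end Spread2
end Gauge


namespace Gauge
section Basic
variable {σ τ : G}

lemma zpow_add_apply (σ : G) (m n : ℤ) (x : ℚ) : (σ ^ (m+n)) x = (σ^m) ((σ^n) x) := by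
  rw [zpow_add]; rfl

lemma commute_apply (h : Commute σ τ) (x : ℚ) : σ (τ x) = τ (σ x) := by
  have h1 : (σ * τ) x = (τ * σ) x := by rw [h.eq]
  exact h1

lemma commute_of_forall (h : ∀ x, σ (τ x) = τ (σ x)) : Commute σ τ := by
  have : τ * σ = σ * τ := by ext x; exact (h x).symm
  exact this.symm

lemma fix_zpow {x : ℚ} (h : σ x = x) (i : ℤ) : (σ ^ i) x = x := by
  induction i using Int.induction_on with
  | zero => rfl
  | succ j ih => rw [show (j:ℤ)+1 = 1+(j:ℤ) by ring, zpow_add_apply, ih, zpow_one, h]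
  | pred j ih =>
    rw [show (-(j:ℤ)-1) = (-1) + (-(j:ℤ)) by ring, zpow_add_apply, ih, zpow_neg_one]
    conv_lhs => rw [← h]
    exact Ginv_apply_apply σ x

/-- if σ moves every point up (on the whole line), exponent monotonicity -/
lemma le_zpow_up (hup : ∀ y, y < σ y) (t : ℕ) (x : ℚ) : x ≤ (σ ^ (t:ℤ)) x := by
  induction t with
  | zero => simp
  | succ s ih =>
    rw [show ((s+1:ℕ):ℤ) = 1 + (s:ℤ) by push_cast; ring, zpow_add_apply, zpow_one]
    exact le_trans ih (le_of_lt (hup _))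

lemma zpow_mono_exp (hup : ∀ y, y < σ y) {i j : ℤ} (h : i ≤ j) (x : ℚ) :
    (σ ^ i) x ≤ (σ ^ j) x := by
  have h1 : (σ ^ j) x = (σ ^ i) ((σ ^ (j - i)) x) := by
    rw [← zpow_add_apply]; congr 1; ring
  obtain ⟨t, ht⟩ := Int.eq_ofNat_of_zero_le (by linarith : (0:ℤ) ≤ j - i)
  rw [h1]
  apply (σ ^ i).monotone
  rw [ht]
  exact le_zpow_up hup t x

/-- points below a fixed point stay below it under all powers -/
lemma zpow_lt_fix {x b : ℚ} (hb : σ b = b) (hx : x < b) (i : ℤ) : (σ ^ i) x < b := by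
  have : (σ ^ i) x < (σ ^ i) b := (σ ^ i).strictMono hx
  rwa [fix_zpow hb i] at this

end Basic
end Gauge

namespace Gauge

section Orb
variable {k : G}

lemma orbRel_refl (k : G) (x : ℚ) : orbRel k x x := ⟨0, 0, by simp⟩

lemma orbRel_symm {x y : ℚ} (h : orbRel k x y) : orbRel k y x := by
  obtain ⟨m, n, hm, hn⟩ := h
  refine ⟨-n, -m, ?_, ?_⟩
  · have := (k ^ (-n : ℤ)).monotone hn
    rwa [← zpow_add_apply, neg_add_cancel, zpow_zero, Gone_apply] at this
  · have := (k ^ (-m : ℤ)).monotone hm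
    rwa [← zpow_add_apply, neg_add_cancel, zpow_zero, Gone_apply] at this

lemma orbRel_trans {x y z : ℚ} (h1 : orbRel k x y) (h2 : orbRel k y z) : orbRel k x z := by
  obtain ⟨m, n, hm, hn⟩ := h1
  obtain ⟨m', n', hm', hn'⟩ := h2
  refine ⟨m' + m, n' + n, ?_, ?_⟩
  · rw [zpow_add_apply]
    exact le_trans ((k ^ m').monotone hm) hm'
  · rw [zpow_add_apply]
    exact le_trans hn' ((k ^ n').monotone hn)

lemma orbRel_convex {x y y' z : ℚ} (h1 : orbRel k x y) (h2 : orbRel k x y')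
    (hl : y ≤ z) (hr : z ≤ y') : orbRel k x z := by
  obtain ⟨m, _, hm, _⟩ := h1
  obtain ⟨_, n', _, hn'⟩ := h2
  exact ⟨m, n', le_trans hm hl, le_trans hr hn'⟩

lemma orbRel_translate {σ : G} (hσk : Commute σ k) {x y : ℚ} (h : orbRel k x y) :
    orbRel k (σ x) (σ y) := by
  obtain ⟨m, n, hm, hn⟩ := h
  refine ⟨m, n, ?_, ?_⟩
  · have := σ.monotone hm
    rwa [commute_apply (hσk.zpow_right m) x] at this
  · have := σ.monotone hn
    rwa [commute_apply (hσk.zpow_right n) x] at this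

/-- direction lemma: all points in the orbital of `y₀` (moved up) are moved up -/
lemma orbital_direction {σ : G} {y₀ : ℚ} (h0 : y₀ < σ y₀) {x : ℚ}
    (hx : orbRel σ y₀ x) : x < σ x := by
  by_contra hcon
  push_neg at hcon   -- σ x ≤ x
  obtain ⟨m, n, hm, hn⟩ := hx
  -- downward: for t : ℕ, σ^t x ≤ x
  have hdown : ∀ t : ℕ, (σ ^ (t:ℤ)) x ≤ x := by
    intro t
    induction t with
    | zero => simp
    | succ s ih =>
      rw [show ((s+1:ℕ):ℤ) = (s:ℤ) + 1 by push_cast; ring, zpow_add_apply, zpow_one]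
      calc (σ^(s:ℤ)) (σ x) ≤ (σ^(s:ℤ)) x := (σ^(s:ℤ)).monotone hcon
        _ ≤ x := ih
  have hdec : ∀ i j : ℤ, i ≤ j → (σ ^ j) x ≤ (σ ^ i) x := by
    intro i j hij
    have h1 : (σ ^ j) x = (σ ^ i) ((σ ^ (j - i)) x) := by
      rw [← zpow_add_apply]; congr 1; ring
    obtain ⟨t, ht⟩ := Int.eq_ofNat_of_zero_le (by linarith : (0:ℤ) ≤ j - i)
    rw [h1]
    apply (σ ^ i).monotone
    rw [ht]
    exact hdown t
  have hnorb : ∀ l : ℤ, (σ ^ l) x ≠ y₀ := by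
    intro l hl
    have h2 : σ ((σ ^ l) x) ≤ (σ ^ l) x := by
      have := (σ ^ l).monotone hcon
      rwa [commute_apply ((Commute.refl σ).zpow_left l) x] at this
    rw [hl] at h2
    exact absurd h0 (not_lt.mpr h2)
  -- T = set of exponents pushed at or below y₀
  set T : ℤ → Prop := fun i => (σ ^ i) x ≤ y₀ with hT
  have hTne : ∃ i, T i := by
    refine ⟨-n, ?_⟩
    have := (σ ^ (-n:ℤ)).monotone hn
    rwa [← zpow_add_apply, neg_add_cancel, zpow_zero, Gone_apply] at this
  have hnotm : ¬ T (-m) := by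
    have hy : y₀ ≤ (σ ^ (-m:ℤ)) x := by
      have := (σ ^ (-m:ℤ)).monotone hm
      rwa [← zpow_add_apply, neg_add_cancel, zpow_zero, Gone_apply] at this
    have : y₀ < (σ ^ (-m:ℤ)) x := lt_of_le_of_ne hy (Ne.symm (hnorb (-m)))
    exact not_le.mpr this
  have hbdd : ∃ b : ℤ, ∀ z : ℤ, T z → b ≤ z := by
    refine ⟨-m + 1, ?_⟩
    intro z hz
    by_contra hzb
    push_neg at hzb
    have hzm : z ≤ -m := by linarith
    exact hnotm (le_trans (hdec z (-m) hzm) hz)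
  obtain ⟨i₀, hi₀, hleast⟩ := Int.exists_least_of_bdd hbdd hTne
  have hi₁ : ¬ T (i₀ - 1) := fun hc => by linarith [hleast _ hc]
  -- y₀ < σ^(i₀-1) x, apply σ
  have h4 : y₀ < (σ ^ (i₀ - 1 : ℤ)) x := lt_of_not_ge hi₁
  have h5 : σ y₀ < σ ((σ ^ (i₀ - 1 : ℤ)) x) := σ.strictMono h4
  have h6 := zpow_add_apply σ 1 (i₀-1) x
  rw [show (1:ℤ)+(i₀-1)=i₀ by ring, zpow_one] at h6
  rw [← h6] at h5
  exact absurd (le_trans hi₀ (le_of_lt h0)) (not_le.mpr h5)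

end Orb
end Gauge

namespace Gauge
section Star

variable {f g k : G}
variable (hfg : Commute f g) (hfk : Commute f k) (hgk : Commute g k)
variable (h1 : ∀ a : ℚ, a < f a) (h2 : ∀ a : ℚ, a < g a)
variable (h3 : ∀ a b : ℚ, ∃ m : ℕ, b ≤ (f ^ m) a)
variable (h4 : ∀ a b : ℚ, ∃ n : ℕ, b ≤ (g ^ n) a)
variable {c a : ℚ} (hc : k c = c) (ha : a < k a)

-- W basics (copied logic from module 2)
include hfg in
lemma W_mul' (m n m' n' : ℤ) : W f g m n * W f g m' n' = W f g (m + m') (n + n') := by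
  have hcomm : Commute (g ^ n) (f ^ m') := (hfg.symm.zpow_zpow n m')
  unfold W
  rw [mul_assoc, ← mul_assoc (g^n), hcomm.eq, mul_assoc, ← zpow_add, ← mul_assoc, ← zpow_add]

lemma W_zero' : W f g 0 0 = (1 : G) := by unfold W; simp

include hfk hgk in
lemma W_commute_k (m n : ℤ) : Commute (W f g m n) k :=
  ((hfk.symm.zpow_right m).symm.mul_left ((hgk.symm.zpow_right n).symm))

include hfg in
lemma W_zpow_eq (d e j : ℤ) : (W f g d e) ^ j = W f g (j*d) (j*e) := by
  have hcomm : Commute (f ^ d) (g ^ e) := hfg.zpow_zpow d e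
  unfold W
  rw [hcomm.mul_zpow, ← zpow_mul, ← zpow_mul]
  congr 1 <;> ring

/-- the stabilizer relation -/
def St (f g k : G) (a : ℚ) (m n : ℤ) : Prop := orbRel k a ((W f g m n) a)

lemma St_zero : St f g k a 0 0 := by
  unfold St; rw [W_zero']; exact orbRel_refl k a

include hfg hfk hgk in
lemma St_add {m n m' n' : ℤ} (h : St f g k a m n) (h' : St f g k a m' n') :
    St f g k a (m + m') (n + n') := by
  unfold St at *
  have htr := orbRel_translate (W_commute_k hfk hgk m n) h'
  rw [← Gmul_apply, W_mul' hfg] at htr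
  exact orbRel_trans h htr

include hfg hfk hgk in
lemma St_neg {m n : ℤ} (h : St f g k a m n) : St f g k a (-m) (-n) := by
  unfold St at *
  have htr := orbRel_translate (W_commute_k hfk hgk (-m) (-n)) h
  rw [← Gmul_apply, W_mul' hfg, neg_add_cancel, neg_add_cancel, W_zero', Gone_apply] at htr
  exact orbRel_symm htr

include hfg hfk hgk in
lemma St_smul {m n : ℤ} (h : St f g k a m n) (j : ℤ) : St f g k a (j*m) (j*n) := by
  induction j using Int.induction_on with
  | zero => simpa using St_zero
  | succ i ih =>
    have := St_add hfg hfk hgk ih h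
    rw [show (i:ℤ)*m + m = ((i:ℤ)+1)*m by ring, show (i:ℤ)*n + n = ((i:ℤ)+1)*n by ring] at this
    exact this
  | pred i ih =>
    have := St_add hfg hfk hgk ih (St_neg hfg hfk hgk h)
    rw [show (-i:ℤ)*m + -m = (-(i:ℤ)-1)*m by ring, show (-i:ℤ)*n + -n = (-(i:ℤ)-1)*n by ring] at this
    exact this

include hfk h1 h3 hc ha in
/-- no pure power of f stabilizes the orbital -/
lemma axis_f {m : ℤ} (hm : m ≠ 0) (hfgSt : ∀ j : ℤ, St f g k a (j*m) 0) : False := by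
  -- fixed upper bound q̄ = f^(M+1) c with a < q̄, k q̄ = q̄
  obtain ⟨M, hM⟩ := h3 c a
  set qb : ℚ := f ((f ^ M) c) with hqb
  have hqbfix : k qb = qb := by
    rw [hqb]
    have h5 : k (f ((f^M) c)) = f (k ((f^M) c)) := commute_apply hfk.symm _
    have h6 : k ((f^M) c) = (f^M) c := by
      have h7 := commute_apply (hfk.symm.pow_right M) c
      rw [h7, hc]
    rw [h5, h6]
  have haqb : a < qb := by
    rw [hqb]
    exact lt_of_le_of_lt hM (h1 _)
  -- all k-powers of a are below qb
  have hbound : ∀ i : ℤ, (k ^ i) a < qb := fun i => zpow_lt_fix hqbfix haqb i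
  -- f^t a is eventually above qb
  obtain ⟨N, hN⟩ := h3 a qb
  -- pick j with j*m ≥ N
  have hfup : ∀ i j : ℤ, i ≤ j → (f ^ i) a ≤ (f ^ j) a := fun i j hij => zpow_mono_exp h1 hij a
  have key : ∀ j : ℤ, (N:ℤ) ≤ j * m → False := by
    intro j hj
    have hSt := hfgSt j
    unfold St at hSt
    obtain ⟨_, n', _, hup⟩ := hSt
    have hW : (W f g (j*m) 0) a = (f ^ (j*m)) a := by
      unfold W; rw [zpow_zero, mul_one]
    rw [hW] at hup
    have : qb ≤ (f ^ (j*m)) a := by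
      calc qb ≤ (f ^ N) a := hN
        _ = (f ^ (N:ℤ)) a := by rw [zpow_natCast]
        _ ≤ (f ^ (j*m)) a := hfup _ _ hj
    have hcontra := lt_of_le_of_lt (le_trans this hup) (hbound n')
    exact lt_irrefl _ hcontra
  rcases lt_or_gt_of_ne hm with hneg | hpos
  · exact key (-(N:ℤ)) (by nlinarith)
  · exact key (N:ℤ) (by nlinarith)

include hgk h2 h4 h3 h1 hfk hc ha in
/-- no pure power of g stabilizes the orbital -/
lemma axis_g {n : ℤ} (hn : n ≠ 0) (hfgSt : ∀ j : ℤ, St f g k a 0 (j*n)) : False := by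
  obtain ⟨M, hM⟩ := h3 c a
  set qb : ℚ := f ((f ^ M) c) with hqb
  have hqbfix : k qb = qb := by
    rw [hqb]
    have h5 : k (f ((f^M) c)) = f (k ((f^M) c)) := commute_apply hfk.symm _
    have h6 : k ((f^M) c) = (f^M) c := by
      have h7 := commute_apply (hfk.symm.pow_right M) c
      rw [h7, hc]
    rw [h5, h6]
  have haqb : a < qb := lt_of_le_of_lt hM (h1 _)
  have hbound : ∀ i : ℤ, (k ^ i) a < qb := fun i => zpow_lt_fix hqbfix haqb i
  obtain ⟨N, hN⟩ := h4 a qb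
  have hgup : ∀ i j : ℤ, i ≤ j → (g ^ i) a ≤ (g ^ j) a := fun i j hij => zpow_mono_exp h2 hij a
  have key : ∀ j : ℤ, (N:ℤ) ≤ j * n → False := by
    intro j hj
    have hSt := hfgSt j
    unfold St at hSt
    obtain ⟨_, n', _, hup⟩ := hSt
    have hW : (W f g 0 (j*n)) a = (g ^ (j*n)) a := by
      unfold W; rw [zpow_zero, one_mul]
    rw [hW] at hup
    have : qb ≤ (g ^ (j*n)) a := by
      calc qb ≤ (g ^ N) a := hN
        _ = (g ^ (N:ℤ)) a := by rw [zpow_natCast]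
        _ ≤ (g ^ (j*n)) a := hgup _ _ hj
    exact lt_irrefl _ (lt_of_le_of_lt (le_trans this hup) (hbound n'))
  rcases lt_or_gt_of_ne hn with hneg | hpos
  · exact key (-(N:ℤ)) (by nlinarith)
  · exact key (N:ℤ) (by nlinarith)

end Star
end Gauge

namespace Gauge
section Star2

variable {f g k : G}
variable (hfg : Commute f g) (hfk : Commute f k) (hgk : Commute g k)
variable (h1 : ∀ a : ℚ, a < f a) (h2 : ∀ a : ℚ, a < g a)
variable (h3 : ∀ a b : ℚ, ∃ m : ℕ, b ≤ (f ^ m) a)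
variable (h4 : ∀ a b : ℚ, ∃ n : ℕ, b ≤ (g ^ n) a)
variable {c a : ℚ} (hc : k c = c) (ha : a < k a)

include hfg hfk hgk h1 h2 h3 h4 hc ha in
lemma exists_generator :
    ∃ d e : ℤ, St f g k a d e ∧ ∀ m n, St f g k a m n → ∃ j : ℤ, m = j*d ∧ n = j*e := by
  classical
  set A : AddSubgroup ℤ :=
    { carrier := {m : ℤ | ∃ n, St f g k a m n}
      zero_mem' := ⟨0, St_zero⟩
      add_mem' := by
        rintro x y ⟨nx, hx⟩ ⟨ny, hy⟩
        exact ⟨nx + ny, St_add hfg hfk hgk hx hy⟩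
      neg_mem' := by
        rintro x ⟨nx, hx⟩
        exact ⟨-nx, St_neg hfg hfk hgk hx⟩ } with hA
  obtain ⟨d, hd⟩ := Int.subgroup_cyclic A
  by_cases hd0 : d = 0
  · refine ⟨0, 0, St_zero, ?_⟩
    intro m n hmn
    have hmA : m ∈ A := ⟨n, hmn⟩
    rw [hd, hd0, AddSubgroup.mem_closure_singleton] at hmA
    obtain ⟨j, hj⟩ := hmA
    simp only [smul_zero] at hj
    subst hj
    -- now n must be zero
    by_cases hn0 : n = 0
    · exact ⟨0, by simp [hn0]⟩
    · exfalso
      exact axis_g hfk hgk h1 h2 h3 h4 hc ha hn0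
        (fun j' => by simpa using St_smul hfg hfk hgk hmn j')
  · have hdA : d ∈ A := by
      rw [hd, AddSubgroup.mem_closure_singleton]
      exact ⟨1, one_smul _ _⟩
    obtain ⟨e, hde⟩ := hdA
    refine ⟨d, e, hde, ?_⟩
    intro m n hmn
    have hmA : m ∈ A := ⟨n, hmn⟩
    rw [hd, AddSubgroup.mem_closure_singleton] at hmA
    obtain ⟨j, hj⟩ := hmA
    rw [zsmul_eq_mul] at hj
    simp only [Int.cast_id] at hj
    refine ⟨j, hj.symm, ?_⟩
    -- difference is on the g-axis
    have hjde : St f g k a (j*d) (j*e) := St_smul hfg hfk hgk hde j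
    have hdiff : St f g k a (m + -(j*d)) (n + -(j*e)) :=
      St_add hfg hfk hgk hmn (St_neg hfg hfk hgk hjde)
    rw [← hj, add_neg_cancel] at hdiff
    by_contra hne
    have hne' : n + -(j*e) ≠ 0 := by
      intro hcon; apply hne; linarith
    exact axis_g hfk hgk h1 h2 h3 h4 hc ha hne'
      (fun j' => by simpa using St_smul hfg hfk hgk hdiff j')

include hfg in
lemma W_inv' (m n : ℤ) : (W f g m n)⁻¹ = W f g (-m) (-n) := by
  have h := W_mul' hfg m n (-m) (-n)
  simp only [add_neg_cancel] at h
  rw [W_zero'] at h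
  exact inv_eq_of_mul_eq_one_right h

/-- the case-2 engine: an element u₀ moving some point of ℚ upward, such that every
stabilizing W is a power of u₀, gives a star interval -/
lemma star_of_power_rep (u₀ : G) {y₀ : ℚ} (hy0 : y₀ < u₀ y₀)
    (hrep : ∀ m n : ℤ, (∃ x ∈ Set.Ioo y₀ (u₀ y₀), (W f g m n) x ∈ Set.Ioo y₀ (u₀ y₀)) →
      ∃ j : ℤ, W f g m n = u₀ ^ j) :
    ∃ p q : ℚ, p < q ∧ (∀ m n : ℤ,
      (∃ x ∈ Set.Ioo p q, (W f g m n) x ∈ Set.Ioo p q) →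
      ∀ x ∈ Set.Ioo p q, (W f g m n) x = x) := by
  refine ⟨y₀, u₀ y₀, hy0, ?_⟩
  intro m n hex z hz
  obtain ⟨j, hj⟩ := hrep m n hex
  obtain ⟨x, hxJ, hWxJ⟩ := hex
  -- the orbit chain of y₀ under u₀ is strictly monotone
  have hchain : StrictMono (fun i : ℤ => (u₀ ^ i) y₀) := by
    apply strictMono_int_of_lt_succ
    intro i
    have horb : orbRel u₀ y₀ ((u₀ ^ i) y₀) := ⟨i, i, le_refl _, le_refl _⟩
    have hlt := orbital_direction hy0 horb
    have heq : (u₀ ^ (i+1)) y₀ = u₀ ((u₀ ^ i) y₀) := by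
      rw [show i+1 = 1+i by ring, zpow_add_apply, zpow_one]
    rw [heq]
    exact hlt
  rcases lt_trichotomy j 0 with hjneg | hj0 | hjpos
  · exfalso
    -- W x = u₀^j x < u₀^(j+1) y₀ ≤ y₀
    have hx2 : (W f g m n) x = (u₀ ^ j) x := by rw [hj]
    have hlt1 : (u₀ ^ j) x < (u₀ ^ j) (u₀ y₀) := (u₀ ^ j).strictMono hxJ.2
    have heq : (u₀ ^ j) (u₀ y₀) = (u₀ ^ (j+1)) y₀ := by
      rw [zpow_add_apply, zpow_one]
    have hle : (u₀ ^ (j+1)) y₀ ≤ (u₀ ^ (0:ℤ)) y₀ := hchain.monotone (by linarith)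
    rw [zpow_zero, Gone_apply] at hle
    have := hWxJ.1
    rw [hx2] at this
    linarith [lt_of_lt_of_le (heq ▸ hlt1) hle]
  · rw [hj0, zpow_zero] at hj
    rw [hj, Gone_apply]
  · exfalso
    have hx2 : (W f g m n) x = (u₀ ^ j) x := by rw [hj]
    have hlt1 : (u₀ ^ j) y₀ < (u₀ ^ j) x := (u₀ ^ j).strictMono hxJ.1
    have hle : (u₀ ^ (1:ℤ)) y₀ ≤ (u₀ ^ j) y₀ := hchain.monotone (by linarith)
    rw [zpow_one] at hle
    have := hWxJ.2
    rw [hx2] at this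
    linarith [lt_of_le_of_lt hle hlt1]

include hfg hfk hgk h1 h2 h3 h4 hc ha in
/-- Main: existence of a star interval -/
lemma exists_star_interval :
    ∃ p q : ℚ, p < q ∧ (∀ m n : ℤ,
      (∃ x ∈ Set.Ioo p q, (W f g m n) x ∈ Set.Ioo p q) →
      ∀ x ∈ Set.Ioo p q, (W f g m n) x = x) := by
  obtain ⟨d, e, hde, hgen⟩ := exists_generator hfg hfk hgk h1 h2 h3 h4 hc ha
  set u : G := W f g d e with hu
  -- I = orbital of k through a; membership helpers
  have hmeet : ∀ (m n : ℤ) (x : ℚ), orbRel k a x → orbRel k a ((W f g m n) x) →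
      St f g k a m n := by
    intro m n x hx hWx
    have htr := orbRel_translate (W_commute_k hfk hgk m n) hx
    exact orbRel_trans hWx (orbRel_symm htr)
  have hIW : ∀ (m n : ℤ), St f g k a m n → ∀ y, orbRel k a y → orbRel k a ((W f g m n) y) := by
    intro m n hSt y hy
    have htr := orbRel_translate (W_commute_k hfk hgk m n) hy
    exact orbRel_trans hSt htr
  by_cases hcase : ∀ x, orbRel k a x → u x = x
  · -- case 1: u acts trivially on the orbital
    refine ⟨a, k a, ha, ?_⟩
    intro m n hex z hz
    have hsubJ : ∀ t, t ∈ Set.Ioo a (k a) → orbRel k a t := by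
      intro t ht
      refine ⟨0, 1, ?_, ?_⟩
      · rw [zpow_zero, Gone_apply]; exact le_of_lt ht.1
      · rw [zpow_one]; exact le_of_lt ht.2
    obtain ⟨x, hxJ, hWxJ⟩ := hex
    have hSt : St f g k a m n := hmeet m n x (hsubJ x hxJ) (hsubJ _ hWxJ)
    obtain ⟨j, hjm, hjn⟩ := hgen m n hSt
    have hWu : W f g m n = u ^ j := by
      rw [hu, W_zpow_eq hfg, hjm, hjn]
    -- u^j acts trivially on the orbital
    have hfixz : ∀ t, orbRel k a t → (u ^ j) t = t := fun t ht => fix_zpow (hcase t ht) j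
    rw [hWu]
    exact hfixz z (hsubJ z hz)
  · -- case 2
    push_neg at hcase
    obtain ⟨y₁, hy₁I, hy₁ne⟩ := hcase
    have hy₁uI : orbRel k a (u y₁) := hIW d e hde y₁ hy₁I
    -- representation property towards star_of_power_rep
    have hsubJgen : ∀ (p' q' : ℚ), orbRel k a p' → orbRel k a q' →
        ∀ t, t ∈ Set.Ioo p' q' → orbRel k a t := by
      intro p' q' hp' hq' t ht
      exact orbRel_convex hp' hq' (le_of_lt ht.1) (le_of_lt ht.2)
    rcases lt_or_gt_of_ne hy₁ne with hlt | hgt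
    · -- u y₁ < y₁ : use u₀ = u⁻¹
      have hy0 : y₁ < u⁻¹ y₁ := by
        have := (u⁻¹ : G).strictMono hlt
        rwa [Ginv_apply_apply] at this
      have hu₀I : orbRel k a (u⁻¹ y₁) := by
        have hStneg : St f g k a (-d) (-e) := St_neg hfg hfk hgk hde
        have := hIW (-d) (-e) hStneg y₁ hy₁I
        rwa [← W_inv' hfg, ← hu] at this
      apply star_of_power_rep (u₀ := u⁻¹) hy0
      intro m n hex
      obtain ⟨x, hxJ, hWxJ⟩ := hex
      have hxI : orbRel k a x := hsubJgen _ _ hy₁I hu₀I x hxJ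
      have hWxI : orbRel k a ((W f g m n) x) := hsubJgen _ _ hy₁I hu₀I _ hWxJ
      obtain ⟨j, hjm, hjn⟩ := hgen m n (hmeet m n x hxI hWxI)
      refine ⟨-j, ?_⟩
      rw [hjm, hjn, ← W_zpow_eq hfg, ← hu, zpow_neg, ← inv_zpow, inv_inv]
    · -- y₁ < u y₁ : use u₀ = u
      apply star_of_power_rep (u₀ := u) hgt
      intro m n hex
      obtain ⟨x, hxJ, hWxJ⟩ := hex
      have hxI : orbRel k a x := hsubJgen _ _ hy₁I hy₁uI x hxJ
      have hWxI : orbRel k a ((W f g m n) x) := hsubJgen _ _ hy₁I hy₁uI _ hWxJ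
      obtain ⟨j, hjm, hjn⟩ := hgen m n (hmeet m n x hxI hWxI)
      refine ⟨j, ?_⟩
      rw [hjm, hjn, ← W_zpow_eq hfg, hu]

end Star2
end Gauge

namespace Gauge

/-- glue an automorphism of (p,q) to an automorphism of ℚ -/
noncomputable def glueFun (p q : ℚ) (ρ : ↥(Set.Ioo p q) ≃o ↥(Set.Ioo p q)) : ℚ → ℚ :=
  fun x => if h : x ∈ Set.Ioo p q then (ρ ⟨x, h⟩ : ℚ) else x

lemma glueFun_mem {p q : ℚ} (ρ : ↥(Set.Ioo p q) ≃o ↥(Set.Ioo p q)) {x : ℚ}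
    (h : x ∈ Set.Ioo p q) : glueFun p q ρ x = (ρ ⟨x, h⟩ : ℚ) := dif_pos h

lemma glueFun_not_mem {p q : ℚ} (ρ : ↥(Set.Ioo p q) ≃o ↥(Set.Ioo p q)) {x : ℚ}
    (h : x ∉ Set.Ioo p q) : glueFun p q ρ x = x := dif_neg h

lemma glueFun_strictMono (p q : ℚ) (ρ : ↥(Set.Ioo p q) ≃o ↥(Set.Ioo p q)) :
    StrictMono (glueFun p q ρ) := by
  intro x y hxy
  by_cases hx : x ∈ Set.Ioo p q <;> by_cases hy : y ∈ Set.Ioo p q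
  · rw [glueFun_mem ρ hx, glueFun_mem ρ hy]
    exact_mod_cast ρ.strictMono (show (⟨x,hx⟩ : ↥(Set.Ioo p q)) < ⟨y,hy⟩ from hxy)
  · rw [glueFun_mem ρ hx, glueFun_not_mem ρ hy]
    have h1 : (ρ ⟨x,hx⟩ : ℚ) < q := (ρ ⟨x,hx⟩).2.2
    have : ¬ y < q → q ≤ y := not_lt.mp
    rcases lt_or_ge y q with h | h
    · exact absurd ⟨lt_trans hx.1 hxy, h⟩ hy
    · exact lt_of_lt_of_le h1 h
  · rw [glueFun_not_mem ρ hx, glueFun_mem ρ hy]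
    have h1 : p < (ρ ⟨y,hy⟩ : ℚ) := (ρ ⟨y,hy⟩).2.1
    rcases lt_or_ge p x with h | h
    · exact absurd ⟨h, lt_trans hxy hy.2⟩ hx
    · exact lt_of_le_of_lt h h1
  · rw [glueFun_not_mem ρ hx, glueFun_not_mem ρ hy]; exact hxy

lemma glueFun_surjective (p q : ℚ) (ρ : ↥(Set.Ioo p q) ≃o ↥(Set.Ioo p q)) :
    Function.Surjective (glueFun p q ρ) := by
  intro z
  by_cases hz : z ∈ Set.Ioo p q
  · refine ⟨(ρ.symm ⟨z, hz⟩ : ℚ), ?_⟩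
    rw [glueFun_mem ρ (ρ.symm ⟨z, hz⟩).2]
    have : (⟨(ρ.symm ⟨z, hz⟩ : ℚ), (ρ.symm ⟨z, hz⟩).2⟩ : ↥(Set.Ioo p q)) = ρ.symm ⟨z, hz⟩ :=
      Subtype.ext rfl
    rw [this, ρ.apply_symm_apply]
  · exact ⟨z, glueFun_not_mem ρ hz⟩

/-- The glued automorphism as an element of G. -/
noncomputable def spt (p q : ℚ) (ρ : ↥(Set.Ioo p q) ≃o ↥(Set.Ioo p q)) : G :=
  StrictMono.orderIsoOfSurjective _ (glueFun_strictMono p q ρ) (glueFun_surjective p q ρ)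

lemma spt_apply (p q : ℚ) (ρ : ↥(Set.Ioo p q) ≃o ↥(Set.Ioo p q)) (x : ℚ) :
    spt p q ρ x = glueFun p q ρ x := by
  exact congrFun (StrictMono.coe_orderIsoOfSurjective _ _ _) x

lemma spt_mem {p q : ℚ} (ρ : ↥(Set.Ioo p q) ≃o ↥(Set.Ioo p q)) {x : ℚ}
    (h : x ∈ Set.Ioo p q) : spt p q ρ x = (ρ ⟨x, h⟩ : ℚ) := by
  rw [spt_apply]; exact glueFun_mem ρ h

lemma spt_not_mem {p q : ℚ} (ρ : ↥(Set.Ioo p q) ≃o ↥(Set.Ioo p q)) {x : ℚ}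
    (h : x ∉ Set.Ioo p q) : spt p q ρ x = x := by
  rw [spt_apply]; exact glueFun_not_mem ρ h

lemma spt_maps {p q : ℚ} (ρ : ↥(Set.Ioo p q) ≃o ↥(Set.Ioo p q)) {x : ℚ}
    (h : x ∈ Set.Ioo p q) : spt p q ρ x ∈ Set.Ioo p q := by
  rw [spt_mem ρ h]; exact (ρ ⟨x, h⟩).2

/-- Existence of two order-automorphisms supported in (p,q) that do not commute at a point of
(p,q), with all four relevant values inside (p,q). -/
lemma exists_noncommuting_pair {p q : ℚ} (hpq : p < q) :
    ∃ (φ ψ : G) (y : ℚ), (∀ x, x ∉ Set.Ioo p q → φ x = x) ∧ (∀ x, x ∈ Set.Ioo p q → φ x ∈ Set.Ioo p q) ∧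
      (∀ x, x ∉ Set.Ioo p q → ψ x = x) ∧ (∀ x, x ∈ Set.Ioo p q → ψ x ∈ Set.Ioo p q) ∧
      y ∈ Set.Ioo p q ∧ φ (ψ y) ≠ ψ (φ y) := by
  have hne : Nonempty (↥(Set.Ioo p q)) := (Set.nonempty_Ioo.2 hpq).to_subtype
  obtain ⟨e⟩ := Order.iso_of_countable_dense ℚ ↥(Set.Ioo p q)
  have two_pos : (0:ℚ) < 2 := by norm_num
  set σ₁ : G := OrderIso.mulLeft₀ (2:ℚ) two_pos with hσ₁
  set σ₂ : G := OrderIso.addRight (1:ℚ) with hσ₂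
  set ρ₁ : ↥(Set.Ioo p q) ≃o ↥(Set.Ioo p q) := e.symm.trans (σ₁.trans e) with hρ₁
  set ρ₂ : ↥(Set.Ioo p q) ≃o ↥(Set.Ioo p q) := e.symm.trans (σ₂.trans e) with hρ₂
  refine ⟨spt p q ρ₁, spt p q ρ₂, (e 0 : ℚ), ?_, ?_, ?_, ?_, (e 0).2, ?_⟩
  · intro x hx; exact spt_not_mem _ hx
  · intro x hx; exact spt_maps _ hx
  · intro x hx; exact spt_not_mem _ hx
  · intro x hx; exact spt_maps _ hx
  · have key : ∀ (ρ : ↥(Set.Ioo p q) ≃o ↥(Set.Ioo p q)) (t : ↥(Set.Ioo p q)),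
        spt p q ρ (t : ℚ) = (ρ t : ℚ) := by
      intro ρ t
      rw [spt_mem ρ t.2]
    have h1 : ∀ (ρ : ↥(Set.Ioo p q) ≃o ↥(Set.Ioo p q)) (s : ℚ),
        spt p q ρ ((e s : ℚ)) = ((ρ (e s)) : ℚ) := fun ρ s => key ρ (e s)
    have e1 : ρ₂ (e 0) = e 1 := by
      rw [hρ₂]; simp [hσ₂, OrderIso.trans_apply]
    have e2 : ρ₁ (e 1) = e 2 := by
      rw [hρ₁]; simp [hσ₁, OrderIso.trans_apply]
    have e3 : ρ₁ (e 0) = e 0 := by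
      rw [hρ₁]; simp [hσ₁, OrderIso.trans_apply]
    have e4 : ρ₂ (e 0) = e 1 := e1
    -- φ (ψ (e 0)) = e 2 ; ψ (φ (e 0)) = e 1
    have c1 : spt p q ρ₁ (spt p q ρ₂ (e 0 : ℚ)) = (e 2 : ℚ) := by
      rw [h1 ρ₂ 0, e1, h1 ρ₁ 1, e2]
    have c2 : spt p q ρ₂ (spt p q ρ₁ (e 0 : ℚ)) = (e 1 : ℚ) := by
      rw [h1 ρ₁ 0, e3, h1 ρ₂ 0, e1]
    rw [c1, c2]
    intro hcon
    have : (e 2) = (e 1) := Subtype.ext hcon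
    have := e.injective this
    norm_num at this

end Gauge

namespace Gauge
section Final

lemma inv_mem_jc {f g k : G} (hk : k ∈ jointCentralizer f g) :
    k⁻¹ ∈ jointCentralizer f g := by
  constructor
  · intro x
    have h := hk.1 (k⁻¹ x)
    rw [Gapply_inv_apply] at h
    calc k⁻¹ (f x) = k⁻¹ (k (f (k⁻¹ x))) := by rw [h]
      _ = f (k⁻¹ x) := Ginv_apply_apply _ _
  · intro x
    have h := hk.2 (k⁻¹ x)
    rw [Gapply_inv_apply] at h
    calc k⁻¹ (g x) = k⁻¹ (k (g (k⁻¹ x))) := by rw [h]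
      _ = g (k⁻¹ x) := Ginv_apply_apply _ _

lemma mul_mem_jc {f g σ τ : G} (hσ : σ ∈ jointCentralizer f g)
    (hτ : τ ∈ jointCentralizer f g) : σ * τ ∈ jointCentralizer f g := by
  constructor
  · intro x
    rw [Gmul_apply, Gmul_apply, hτ.1, hσ.1]
  · intro x
    rw [Gmul_apply, Gmul_apply, hτ.2, hσ.2]

variable {f g : G}
variable (h1 : ∀ a : ℚ, a < f a) (h2 : ∀ a : ℚ, a < g a)
variable (h3 : ∀ a b : ℚ, ∃ m : ℕ, b ≤ (f ^ m) a)
variable (h4 : ∀ a b : ℚ, ∃ n : ℕ, b ≤ (g ^ n) a)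
variable (hfg : Commute f g)
variable (h6 : ∀ h₁ ∈ jointCentralizer f g, ∀ h₂ ∈ jointCentralizer f g,
      ∀ a : ℚ, h₁ (h₂ a) = h₂ (h₁ a))

include h1 h2 h3 h4 hfg h6 in
lemma central_contra {k : G} (hkmem : k ∈ jointCentralizer f g) {c a : ℚ}
    (hc : k c = c) (ha : a < k a) : False := by
  have hfk : Commute f k := (commute_of_forall hkmem.1).symm
  have hgk : Commute g k := (commute_of_forall hkmem.2).symm
  obtain ⟨p, q, hpq, hstar⟩ := exists_star_interval hfg hfk hgk h1 h2 h3 h4 hc ha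
  obtain ⟨φ, ψ, y, hφsupp, hφmaps, hψsupp, hψmaps, hyJ, hne⟩ := exists_noncommuting_pair hpq
  set Φ : G := spread hfg hpq hstar hφsupp hφmaps with hΦ
  set Ψ : G := spread hfg hpq hstar hψsupp hψmaps with hΨ
  have hΦmem : Φ ∈ jointCentralizer f g :=
    ⟨fun x => spread_comm_f hfg hpq hstar hφsupp hφmaps x,
     fun x => spread_comm_g hfg hpq hstar hφsupp hφmaps x⟩
  have hΨmem : Ψ ∈ jointCentralizer f g :=
    ⟨fun x => spread_comm_f hfg hpq hstar hψsupp hψmaps x,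
     fun x => spread_comm_g hfg hpq hstar hψsupp hψmaps x⟩
  have h6' := h6 Φ hΦmem Ψ hΨmem y
  have e1 : Ψ y = ψ y := spread_eval_base hfg hpq hstar hψsupp hψmaps hyJ
  have e2 : Φ y = φ y := spread_eval_base hfg hpq hstar hφsupp hφmaps hyJ
  have e3 : Φ (Ψ y) = φ (ψ y) := by
    rw [e1]
    exact spread_eval_base hfg hpq hstar hφsupp hφmaps (hψmaps y hyJ)
  have e4 : Ψ (Φ y) = ψ (φ y) := by
    rw [e2]
    exact spread_eval_base hfg hpq hstar hψsupp hψmaps (hφmaps y hyJ)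
  rw [e3, e4] at h6'
  exact hne h6'

end Final
end Gauge
/-- If `f, g` is a gauge pair (commuting positive coterminal elements with commutative joint
centralizer), then the joint centralizer of `f` and `g` is countable. -/
theorem gauge_centralizer_countable
    (f g : G)
    (h1 : ∀ a : ℚ, a < f a) (h2 : ∀ a : ℚ, a < g a)
    (h3 : ∀ a b : ℚ, ∃ m : ℕ, b ≤ (f ^ m) a)
    (h4 : ∀ a b : ℚ, ∃ n : ℕ, b ≤ (g ^ n) a)
    (h5 : ∀ a : ℚ, f (g a) = g (f a))
    (h6 : ∀ h₁ ∈ jointCentralizer f g, ∀ h₂ ∈ jointCentralizer f g,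
      ∀ a : ℚ, h₁ (h₂ a) = h₂ (h₁ a)) :
    (jointCentralizer f g).Countable := by
  classical
  have hfg : Commute f g := Gauge.commute_of_forall h5
  have free : ∀ k ∈ jointCentralizer f g, (∃ c : ℚ, k c = c) → k = 1 := by
    rintro k hk ⟨c, hc⟩
    by_contra hk1
    have hex : ∃ a : ℚ, k a ≠ a := by
      by_contra hall
      push_neg at hall
      apply hk1
      ext x
      exact hall x
    obtain ⟨a, hane⟩ := hex
    rcases lt_or_gt_of_ne hane with hlt | hgt
    · have hkinv : k⁻¹ ∈ jointCentralizer f g := Gauge.inv_mem_jc hk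
      have hc' : k⁻¹ c = c := by
        conv_lhs => rw [← hc]
        exact Gauge.Ginv_apply_apply k c
      have ha' : a < k⁻¹ a := by
        have := (k⁻¹ : G).strictMono hlt
        rwa [Gauge.Ginv_apply_apply] at this
      exact absurd (Gauge.central_contra h1 h2 h3 h4 hfg h6 hkinv hc' ha') not_false
    · exact absurd (Gauge.central_contra h1 h2 h3 h4 hfg h6 hk hc hgt) not_false
  have hinj : ∀ σ ∈ jointCentralizer f g, ∀ τ ∈ jointCentralizer f g, σ 0 = τ 0 → σ = τ := by
    intro σ hσ τ hτ h00
    have hmem : σ⁻¹ * τ ∈ jointCentralizer f g :=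
      Gauge.mul_mem_jc (Gauge.inv_mem_jc hσ) hτ
    have hfix : (σ⁻¹ * τ) 0 = 0 := by
      rw [Gauge.Gmul_apply, ← h00, Gauge.Ginv_apply_apply]
    have h1eq : σ⁻¹ * τ = 1 := free _ hmem ⟨0, hfix⟩
    exact (inv_mul_eq_one.mp h1eq)
  have hcnt : Countable ↥(jointCentralizer f g) := by
    apply Function.Injective.countable
      (f := fun σ : ↥(jointCentralizer f g) => (σ.1 0))
    intro σ τ h
    exact Subtype.ext (hinj _ σ.2 _ τ.2 h)
  exact Set.countable_coe_iff.mp hcnt
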